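/- Let Q be a real symmetric positive semidefinite n×n matrix with Q·𝟏 = 0, and let λ₂ > 0 satisfy yᵀQy ≥ λ₂·‖y‖₂² for every y ∈ ℝⁿ with Σ_i y_i = 0. Let Ω be a predefined-time consensus function with data (Ω̂, β, d), and let κ_i ≥ κ > 0 for i = 1,…,n. Let x : [t₀,∞) → ℝⁿ be differentiable with ẋ_i(t) = −κ_i·Ω(|e_i(t)|)/e_i(t) if e_i(t) ≠ 0 and ẋ_i(t) = 0 if e_i(t) = 0, where e(t) = Q·x(t). Then for all t ≥ t₀ + 1/(κ·λ₂·β(n)^{2−d}), x_1(t) = x_2(t) = ⋯ = x_n(t); i.e. consensus is reached in a fixed time bounded by 1/(κ·λ₂·β(n)^{2−d}), independently of x(t₀). -/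

import Mathlib

open Matrix MeasureTheory intervalIntegral

/-- A predefined-time consensus function Ω with data (Ω̂, β, d). -/
def IsPredefinedTimeConsensusFunction (Ω Ωhat : ℝ → ℝ) (β : ℕ → ℝ) (d : ℝ) : Prop :=
  Monotone Ω ∧ (∀ z : ℝ, 0 ≤ z → 0 ≤ Ω z) ∧
  MonotoneOn Ωhat (Set.Ici 0) ∧ (∀ z : ℝ, 0 < z → 0 < Ωhat z) ∧
  ContinuousOn (fun z => Ωhat z / z) (Set.Ioi 0) ∧
  Antitone β ∧ (∀ n : ℕ, 0 < β n) ∧ 1 ≤ d ∧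
  (∀ n : ℕ, 1 ≤ n → ∀ x : Fin n → ℝ, (∀ i, 0 ≤ x i) →
    Ωhat (β n * Real.sqrt (∑ i, x i ^ 2)) ≤ β n ^ d * ∑ i, Ω (x i)) ∧
  (∫ z in Set.Ioi (0:ℝ), z / Ωhat z) = 1

theorem aux_sum_mulVec {n : ℕ} (Q : Matrix (Fin n) (Fin n) ℝ) (hQsymm : Q.IsSymm)
    (hQ1 : Q.mulVec (fun _ => (1:ℝ)) = 0) (y : Fin n → ℝ) :
    ∑ i, Q.mulVec y i = 0 := by
  have h : ∀ j, ∑ i, Q i j = 0 := by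
    intro j
    have := congrFun hQ1 j
    simp [Matrix.mulVec, dotProduct] at this
    calc ∑ i, Q i j = ∑ i, Q j i := by
          refine Finset.sum_congr rfl fun i _ => ?_
          exact (Matrix.IsSymm.apply hQsymm j i).symm ▸ rfl
      _ = 0 := this
  calc ∑ i, Q.mulVec y i = ∑ i, ∑ j, Q i j * y j := by
        simp [Matrix.mulVec, dotProduct]
    _ = ∑ j, (∑ i, Q i j) * y j := by
        rw [Finset.sum_comm]; simp [Finset.sum_mul]
    _ = 0 := by simp [h]

theorem aux_decomp {n : ℕ} (hn : 1 ≤ n) (Q : Matrix (Fin n) (Fin n) ℝ) (hQsymm : Q.IsSymm)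
    (hQ1 : Q.mulVec (fun _ => (1:ℝ)) = 0) (y : Fin n → ℝ) :
    ∃ y' : Fin n → ℝ, (∑ i, y' i) = 0 ∧ Q.mulVec y' = Q.mulVec y ∧
      y' ⬝ᵥ Q.mulVec y' = y ⬝ᵥ Q.mulVec y ∧ (∀ i j, y' i = 0 → y' j = 0 → y i = y j) := by
  set c : ℝ := (∑ i, y i) / n with hc
  have hmv : Q.mulVec (fun i => y i - c) = Q.mulVec y := by
    have : (fun i => y i - c) = y - c • (fun _ => (1:ℝ)) := by funext i; simp
    rw [this, Matrix.mulVec_sub, Matrix.mulVec_smul, hQ1]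
    simp
  refine ⟨fun i => y i - c, ?_, hmv, ?_, ?_⟩
  · have hn0 : (n:ℝ) ≠ 0 := by positivity
    simp [Finset.sum_sub_distrib, hc]
    field_simp
    ring
  · rw [hmv]
    have : (fun i => y i - c) ⬝ᵥ Q.mulVec y
        = y ⬝ᵥ Q.mulVec y - c * ∑ i, Q.mulVec y i := by
      simp [dotProduct, sub_mul, Finset.sum_sub_distrib, Finset.mul_sum]
    rw [this, aux_sum_mulVec Q hQsymm hQ1 y]
    ring
  · intro i j hi hj
    simp only at hi hj
    have h1 : y i = c := by linarith
    have h2 : y j = c := by linarith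
    rw [h1, h2]

theorem aux_consensus {n : ℕ} (hn : 1 ≤ n) (Q : Matrix (Fin n) (Fin n) ℝ) (hQsymm : Q.IsSymm)
    (hQ1 : Q.mulVec (fun _ => (1:ℝ)) = 0) (lam2 : ℝ) (hlam2 : 0 < lam2)
    (hRay : ∀ y : Fin n → ℝ, (∑ i, y i) = 0 → lam2 * (∑ i, y i ^ 2) ≤ y ⬝ᵥ Q.mulVec y)
    (y : Fin n → ℝ) (hV : y ⬝ᵥ Q.mulVec y = 0) : ∀ i j, y i = y j := by
  obtain ⟨y', hsum, hmv, hquad, hcons⟩ := aux_decomp hn Q hQsymm hQ1 y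
  have h1 := hRay y' hsum
  rw [hquad, hV] at h1
  have h2 : (∑ i, y' i ^ 2) ≤ 0 := nonpos_of_mul_nonpos_right (by linarith) hlam2
  have h3 : ∀ i ∈ Finset.univ, y' i ^ 2 = 0 := by
    rw [← Finset.sum_eq_zero_iff_of_nonneg (fun i _ => sq_nonneg (y' i))]
    have : (0:ℝ) ≤ ∑ i, y' i ^ 2 := Finset.sum_nonneg fun i _ => sq_nonneg _
    linarith
  intro i j
  exact hcons i j (pow_eq_zero_iff two_ne_zero |>.mp (h3 i (Finset.mem_univ i)))
    (pow_eq_zero_iff two_ne_zero |>.mp (h3 j (Finset.mem_univ j)))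

theorem aux_mulVec_zero {n : ℕ} (hn : 1 ≤ n) (Q : Matrix (Fin n) (Fin n) ℝ) (hQsymm : Q.IsSymm)
    (hQ1 : Q.mulVec (fun _ => (1:ℝ)) = 0) (lam2 : ℝ) (hlam2 : 0 < lam2)
    (hRay : ∀ y : Fin n → ℝ, (∑ i, y i) = 0 → lam2 * (∑ i, y i ^ 2) ≤ y ⬝ᵥ Q.mulVec y)
    (y : Fin n → ℝ) (hV : y ⬝ᵥ Q.mulVec y = 0) : Q.mulVec y = 0 := by
  have hcons := aux_consensus hn Q hQsymm hQ1 lam2 hlam2 hRay y hV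
  have hpos : 0 < n := hn
  set i0 : Fin n := ⟨0, hpos⟩ with hi0
  have hy : y = (y i0) • (fun _ => (1:ℝ)) := by
    funext i
    simp [hcons i i0]
  rw [hy, Matrix.mulVec_smul, hQ1, smul_zero]

theorem aux_rayleigh2 {n : ℕ} (hn : 1 ≤ n) (Q : Matrix (Fin n) (Fin n) ℝ) (hQsymm : Q.IsSymm)
    (hQ1 : Q.mulVec (fun _ => (1:ℝ)) = 0) (lam2 : ℝ) (hlam2 : 0 < lam2)
    (hRay : ∀ y : Fin n → ℝ, (∑ i, y i) = 0 → lam2 * (∑ i, y i ^ 2) ≤ y ⬝ᵥ Q.mulVec y)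
    (y : Fin n → ℝ) :
    lam2 * (y ⬝ᵥ Q.mulVec y) ≤ ∑ i, (Q.mulVec y i) ^ 2 := by
  obtain ⟨y', hsum, hmv, hquad, _⟩ := aux_decomp hn Q hQsymm hQ1 y
  set V : ℝ := y ⬝ᵥ Q.mulVec y with hVdef
  set S : ℝ := ∑ i, (Q.mulVec y i) ^ 2 with hSdef
  have hA : (0:ℝ) ≤ ∑ i, y' i ^ 2 := Finset.sum_nonneg fun i _ => sq_nonneg _
  have hS : (0:ℝ) ≤ S := Finset.sum_nonneg fun i _ => sq_nonneg _
  have h1 : lam2 * (∑ i, y' i ^ 2) ≤ V := le_trans (hRay y' hsum) (le_of_eq hquad)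
  have hVnn : 0 ≤ V := le_trans (by positivity) h1
  have hCS : V ^ 2 ≤ (∑ i, y' i ^ 2) * S := by
    have hVy : V = ∑ i, y' i * Q.mulVec y i := by
      rw [← hquad, ← hmv]; rfl
    rw [hVy]
    exact Finset.sum_mul_sq_le_sq_mul_sq _ _ _
  rcases eq_or_lt_of_le hVnn with h | h
  · rw [← h]; simpa using hS
  · have key : lam2 * V ^ 2 ≤ V * S := by nlinarith
    nlinarith

theorem aux_dot_swap {n : ℕ} (Q : Matrix (Fin n) (Fin n) ℝ) (hQsymm : Q.IsSymm)
    (a b : Fin n → ℝ) : a ⬝ᵥ Q.mulVec b = b ⬝ᵥ Q.mulVec a := by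
  simp only [dotProduct, Matrix.mulVec, Finset.mul_sum]
  rw [Finset.sum_comm]
  refine Finset.sum_congr rfl fun i _ => Finset.sum_congr rfl fun j _ => ?_
  have hsym : Q j i = Q i j := by
    have := Matrix.IsSymm.apply hQsymm j i
    simpa [Matrix.transpose_apply] using this.symm
  rw [hsym]; ring

theorem aux_hasDerivV {n : ℕ} (Q : Matrix (Fin n) (Fin n) ℝ) (hQsymm : Q.IsSymm)
    (x : ℝ → Fin n → ℝ) (t : ℝ) (w : Fin n → ℝ) (hx : HasDerivAt x w t) :
    HasDerivAt (fun s => (x s) ⬝ᵥ Q.mulVec (x s)) (2 * (w ⬝ᵥ Q.mulVec (x t))) t := by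
  have hxi : ∀ i, HasDerivAt (fun s => x s i) (w i) t := fun i => (hasDerivAt_pi.mp hx) i
  have hmvi : ∀ i, HasDerivAt (fun s => Q.mulVec (x s) i) (Q.mulVec w i) t := by
    intro i
    simp only [Matrix.mulVec, dotProduct]
    exact HasDerivAt.fun_sum (fun j _ => (hxi j).const_mul (Q i j))
  have hsum : HasDerivAt (fun s => ∑ i, x s i * Q.mulVec (x s) i)
      (∑ i, (w i * Q.mulVec (x t) i + x t i * Q.mulVec w i)) t :=
    HasDerivAt.fun_sum (fun i _ => (hxi i).mul (hmvi i))
  have heq : (∑ i, (w i * Q.mulVec (x t) i + x t i * Q.mulVec w i))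
      = 2 * (w ⬝ᵥ Q.mulVec (x t)) := by
    rw [Finset.sum_add_distrib]
    have h1 : (∑ i, x t i * Q.mulVec w i) = (x t) ⬝ᵥ Q.mulVec w := rfl
    have h2 : (∑ i, w i * Q.mulVec (x t) i) = w ⬝ᵥ Q.mulVec (x t) := rfl
    rw [h1, h2, aux_dot_swap Q hQsymm (x t) w]
    ring
  rw [← heq]
  exact hsum

theorem aux_superadd_ite {n : ℕ} (hn : 1 ≤ n) (Ω Ωhat : ℝ → ℝ) (β : ℕ → ℝ) (d : ℝ)
    (hΩ0 : Ω 0 = 0)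
    (hsuper : ∀ m : ℕ, 1 ≤ m → ∀ x : Fin m → ℝ, (∀ i, 0 ≤ x i) →
      Ωhat (β m * Real.sqrt (∑ i, x i ^ 2)) ≤ β m ^ d * ∑ i, Ω (x i))
    (E : Fin n → ℝ) :
    Ωhat (β n * Real.sqrt (∑ i, E i ^ 2))
      ≤ β n ^ d * ∑ i, (if E i = 0 then 0 else Ω |E i|) := by
  have h := hsuper n hn (fun i => |E i|) (fun i => abs_nonneg _)
  have h2 : (∑ i : Fin n, |E i| ^ 2) = ∑ i, E i ^ 2 := by simp [sq_abs]
  rw [h2] at h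
  refine h.trans (le_of_eq ?_)
  congr 1
  refine Finset.sum_congr rfl fun i _ => ?_
  by_cases hE : E i = 0 <;> simp [hE, hΩ0]

/-- fixed-time part of Theorem 3: protocol (ii) on a static network with
Laplacian Q and algebraic connectivity at least λ₂ reaches consensus in a fixed time
bounded by 1/(κλ₂β(n)^{2−d}), independently of the initial condition. -/
theorem stmt14 {n : ℕ} (hn : 1 ≤ n) (Q : Matrix (Fin n) (Fin n) ℝ)
    (hQsymm : Q.IsSymm) (hQpsd : Q.PosSemidef)
    (hQ1 : Q.mulVec (fun _ => (1:ℝ)) = 0)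
    (lam2 : ℝ) (hlam2 : 0 < lam2)
    (hRay : ∀ y : Fin n → ℝ, (∑ i, y i) = 0 →
      lam2 * (∑ i, y i ^ 2) ≤ y ⬝ᵥ Q.mulVec y)
    (Ω Ωhat : ℝ → ℝ) (β : ℕ → ℝ) (d : ℝ)
    (hΩ : IsPredefinedTimeConsensusFunction Ω Ωhat β d)
    (κ : Fin n → ℝ) (k : ℝ) (hk : 0 < k) (hκ : ∀ i, k ≤ κ i)
    (t₀ : ℝ) (x : ℝ → Fin n → ℝ)
    (hx : ∀ t, t₀ ≤ t →
      HasDerivAt x (fun i => if Q.mulVec (x t) i = 0 then 0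
        else -(κ i * Ω |Q.mulVec (x t) i| / Q.mulVec (x t) i)) t) :
    ∀ t, t₀ + 1 / (k * lam2 * β n ^ ((2:ℝ) - d)) ≤ t → ∀ i j, x t i = x t j := by
  obtain ⟨hΩmono, hΩnn, hΩhatmono, hΩhatpos, hΩhatcont, hβanti, hβpos, hd, hsuper, hint⟩ := hΩ
  have hβn : 0 < β n := hβpos n
  have hβd : 0 < β n ^ d := Real.rpow_pos_of_pos hβn d
  have hβ2d : 0 < β n ^ ((2:ℝ) - d) := Real.rpow_pos_of_pos hβn _
  set K : ℝ := k * lam2 * β n ^ ((2:ℝ) - d) with hKdef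
  have hK0 : 0 < K := by positivity
  intro t ht
  have ht₀t : t₀ ≤ t := by
    have h1K : 0 < 1 / K := by positivity
    linarith
  -- setup
  set V : ℝ → ℝ := fun s => (x s) ⬝ᵥ Q.mulVec (x s) with hVdef
  set w : ℝ → Fin n → ℝ := fun s => (fun i => if Q.mulVec (x s) i = 0 then 0
      else -(κ i * Ω |Q.mulVec (x s) i| / Q.mulVec (x s) i)) with hwdef
  have hVder : ∀ s, t₀ ≤ s → HasDerivAt V (2 * (w s ⬝ᵥ Q.mulVec (x s))) s :=
    fun s hs => aux_hasDerivV Q hQsymm x s (w s) (hx s hs)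
  -- pointwise value of w ⬝ᵥ e
  have hwe : ∀ s, w s ⬝ᵥ Q.mulVec (x s)
      = -∑ i, (if Q.mulVec (x s) i = 0 then 0 else κ i * Ω |Q.mulVec (x s) i|) := by
    intro s
    rw [← Finset.sum_neg_distrib]
    refine Finset.sum_congr rfl fun i _ => ?_
    by_cases h : Q.mulVec (x s) i = 0
    · simp [hwdef, h]
    · simp only [hwdef, h, if_false]
      field_simp
  have hsum_nn : ∀ s, 0 ≤ ∑ i, (if Q.mulVec (x s) i = 0 then 0 else κ i * Ω |Q.mulVec (x s) i|) := by
    intro s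
    refine Finset.sum_nonneg fun i _ => ?_
    by_cases h : Q.mulVec (x s) i = 0
    · simp [h]
    · simp only [h, if_false]
      exact mul_nonneg (le_trans hk.le (hκ i)) (hΩnn _ (abs_nonneg _))
  have hwe_nonpos : ∀ s, w s ⬝ᵥ Q.mulVec (x s) ≤ 0 := by
    intro s; rw [hwe s]; linarith [hsum_nn s]
  -- V is nonnegative
  have hVnn : ∀ s, 0 ≤ V s := by
    intro s
    obtain ⟨y', hsum, _, hquad, _⟩ := aux_decomp hn Q hQsymm hQ1 (x s)
    have := hRay y' hsum
    have h0 : (0:ℝ) ≤ lam2 * ∑ i, y' i ^ 2 := by positivity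
    rw [hquad] at this
    exact le_trans h0 this
  -- V is antitone on [t₀, ∞)
  have hVcont : ContinuousOn V (Set.Ici t₀) :=
    fun s hs => ((hVder s hs).continuousAt).continuousWithinAt
  have hVanti : AntitoneOn V (Set.Ici t₀) := by
    apply antitoneOn_of_deriv_nonpos (convex_Ici t₀) hVcont
    · intro s hs
      rw [interior_Ici] at hs
      exact ((hVder s hs.le).differentiableAt).differentiableWithinAt
    · intro s hs
      rw [interior_Ici] at hs
      rw [(hVder s hs.le).deriv]
      linarith [hwe_nonpos s]
  -- reduce to V t = 0
  suffices hV0 : V t = 0 by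
    exact aux_consensus hn Q hQsymm hQ1 lam2 hlam2 hRay (x t) hV0
  -- case split on Ω 0
  rcases le_or_gt (Ω 0) 0 with hΩ0le | hΩ0pos
  case inr =>
    -- Ω 0 > 0 : then V t₀ must be 0 (otherwise the dynamics would be
    -- non-differentiable at the first zero of V), and V is antitone.
    have hder_neg : ∀ s, t₀ ≤ s → 0 < V s →
        2 * (w s ⬝ᵥ Q.mulVec (x s)) ≤ -(2 * (k * Ω 0)) := by
      intro s hs hVs
      have he : Q.mulVec (x s) ≠ 0 := by
        intro h
        have : V s = 0 := by
          show x s ⬝ᵥ Q.mulVec (x s) = 0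
          rw [h, dotProduct_zero]
        linarith
      obtain ⟨i0, hi0⟩ := Function.ne_iff.mp he
      have hi0' : Q.mulVec (x s) i0 ≠ 0 := by simpa using hi0
      have hterm : k * Ω 0 ≤ (if Q.mulVec (x s) i0 = 0 then 0
          else κ i0 * Ω |Q.mulVec (x s) i0|) := by
        rw [if_neg hi0']
        have h1 : Ω 0 ≤ Ω |Q.mulVec (x s) i0| := hΩmono (abs_nonneg _)
        exact mul_le_mul (hκ i0) h1 hΩ0pos.le (le_trans hk.le (hκ i0))
      have hsum : k * Ω 0 ≤ ∑ i, (if Q.mulVec (x s) i = 0 then 0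
          else κ i * Ω |Q.mulVec (x s) i|) := by
        refine le_trans hterm (Finset.single_le_sum
          (f := fun i => if Q.mulVec (x s) i = 0 then 0 else κ i * Ω |Q.mulVec (x s) i|)
          (fun i _ => ?_) (Finset.mem_univ i0))
        by_cases h : Q.mulVec (x s) i = 0
        · simp [h]
        · simp only [h, if_false]
          exact mul_nonneg (le_trans hk.le (hκ i)) (hΩnn _ (abs_nonneg _))
      rw [hwe s]
      linarith
    have hkc : 0 < k * Ω 0 := mul_pos hk hΩ0pos
    have hVt₀ : V t₀ = 0 := by
      by_contra hV₀
      have hVt₀pos : 0 < V t₀ := lt_of_le_of_ne (hVnn t₀) (Ne.symm hV₀)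
      -- V must hit zero
      have hhit : ∃ s, t₀ ≤ s ∧ V s = 0 := by
        by_contra hno
        push_neg at hno
        have hVall : ∀ s, t₀ ≤ s → 0 < V s :=
          fun s hs => lt_of_le_of_ne (hVnn s) (Ne.symm (hno s hs))
        set s₁ : ℝ := t₀ + V t₀ / (2 * (k * Ω 0)) + 1 with hs₁def
        have hs₁ : t₀ < s₁ := by
          have h0 : 0 < V t₀ / (2 * (k * Ω 0)) := by positivity
          show t₀ < t₀ + V t₀ / (2 * (k * Ω 0)) + 1
          linarith
        obtain ⟨ξ, hξ, hslope⟩ := exists_hasDerivAt_eq_slope V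
          (fun s => 2 * (w s ⬝ᵥ Q.mulVec (x s))) hs₁
          (fun u hu => ((hVder u hu.1).continuousAt).continuousWithinAt)
          (fun u hu => hVder u hu.1.le)
        have hb := hder_neg ξ hξ.1.le (hVall ξ hξ.1.le)
        rw [hslope] at hb
        rw [div_le_iff₀ (by linarith : (0:ℝ) < s₁ - t₀)] at hb
        have hval : -(2 * (k * Ω 0)) * (s₁ - t₀) = -(V t₀) - 2 * (k * Ω 0) := by
          rw [hs₁def]
          field_simp
          ring
        rw [hval] at hb
        have := hVall s₁ hs₁.le
        linarith
      set ZS : Set ℝ := {s : ℝ | t₀ ≤ s ∧ V s = 0} with hZSdef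
      have hZSne : ZS.Nonempty := by
        obtain ⟨s, hs1, hs2⟩ := hhit
        exact ⟨s, hs1, hs2⟩
      have hbdd : BddBelow ZS := ⟨t₀, fun z hz => hz.1⟩
      set τ : ℝ := sInf ZS with hτdef
      have hτt₀ : t₀ ≤ τ := le_csInf hZSne fun z hz => hz.1
      have hVpos_before : ∀ s, t₀ ≤ s → s < τ → 0 < V s := by
        intro s hs hsτ
        rcases (hVnn s).lt_or_eq with h | h
        · exact h
        · exfalso
          have : s ∈ ZS := ⟨hs, h.symm⟩
          exact absurd (csInf_le hbdd this) (not_le.mpr hsτ)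
      have hVτ : V τ = 0 := by
        by_contra h
        have hVτpos : 0 < V τ := lt_of_le_of_ne (hVnn τ) (Ne.symm h)
        have hcont : ContinuousAt V τ := (hVder τ hτt₀).continuousAt
        have hev : V ⁻¹' Set.Ioi 0 ∈ nhds τ := hcont (Ioi_mem_nhds hVτpos)
        obtain ⟨ε, hε, hball⟩ := Metric.mem_nhds_iff.mp hev
        have hlt : sInf ZS < τ + ε := by
          rw [← hτdef]; linarith
        obtain ⟨z, hz, hzlt⟩ := (csInf_lt_iff hbdd hZSne).mp hlt
        have hτz : τ ≤ z := csInf_le hbdd hz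
        have : z ∈ Metric.ball τ ε := by
          rw [Metric.mem_ball, Real.dist_eq, abs_of_nonneg (by linarith)]
          linarith
        have := hball this
        simp only [Set.mem_preimage, Set.mem_Ioi] at this
        rw [hz.2] at this
        exact lt_irrefl 0 this
      have hτgt : t₀ < τ := by
        rcases eq_or_lt_of_le hτt₀ with h | h
        · exfalso; rw [← h] at hVτ; linarith
        · exact h
      -- slope estimate before τ
      have hslope_est : ∀ s, t₀ ≤ s → s < τ → 2 * (k * Ω 0) * (τ - s) ≤ V s := by
        intro s hs hsτ
        obtain ⟨ξ, hξ, hsl⟩ := exists_hasDerivAt_eq_slope V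
          (fun u => 2 * (w u ⬝ᵥ Q.mulVec (x u))) hsτ
          (fun u hu => ((hVder u (hs.trans hu.1)).continuousAt).continuousWithinAt)
          (fun u hu => hVder u (hs.trans hu.1.le))
        have hb := hder_neg ξ (hs.trans hξ.1.le) (hVpos_before ξ (hs.trans hξ.1.le) hξ.2)
        rw [hsl] at hb
        rw [div_le_iff₀ (by linarith : (0:ℝ) < τ - s)] at hb
        rw [hVτ] at hb
        nlinarith
      -- derivative of V at τ is 0
      have he0 : Q.mulVec (x τ) = 0 :=
        aux_mulVec_zero hn Q hQsymm hQ1 lam2 hlam2 hRay (x τ) hVτ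
      have hD0 : HasDerivAt V 0 τ := by
        have := hVder τ hτt₀
        rw [he0, dotProduct_zero, mul_zero] at this
        exact this
      -- contradiction via little-o
      have hlo := hasDerivAt_iff_isLittleO.mp hD0
      have hev2 := hlo.def hkc
      have hev3 : ∀ᶠ s in nhdsWithin τ (Set.Iio τ),
          ‖V s - V τ - (s - τ) • (0:ℝ)‖ ≤ k * Ω 0 * ‖s - τ‖ :=
        hev2.filter_mono nhdsWithin_le_nhds
      have hmem : Set.Ioo t₀ τ ∈ nhdsWithin τ (Set.Iio τ) :=
        Ioo_mem_nhdsLT_of_mem ⟨hτgt, le_refl τ⟩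
      obtain ⟨s, hbound, hsIoo⟩ := (hev3.and (Filter.eventually_of_mem hmem fun y hy => hy)).exists
      have hVs := hslope_est s hsIoo.1.le hsIoo.2
      rw [hVτ] at hbound
      simp only [smul_zero, sub_zero] at hbound
      rw [Real.norm_eq_abs, Real.norm_eq_abs, abs_of_nonneg (hVnn s),
        abs_of_nonpos (by linarith [hsIoo.2] : s - τ ≤ 0)] at hbound
      have hτs : 0 < τ - s := by linarith [hsIoo.2]
      nlinarith
    -- conclude V t = 0 from antitonicity
    have h1 : V t ≤ V t₀ := hVanti (Set.mem_Ici.mpr (le_refl t₀)) (Set.mem_Ici.mpr ht₀t) ht₀t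
    have h2 := hVnn t
    linarith
  case inl =>
  have hΩ0 : Ω 0 = 0 := le_antisymm hΩ0le (hΩnn 0 le_rfl)
  by_contra hVne
  have hVt : 0 < V t := lt_of_le_of_ne (hVnn t) (Ne.symm hVne)
  have hVpos : ∀ s ∈ Set.Icc t₀ t, 0 < V s := by
    intro s hs
    exact lt_of_lt_of_le hVt (hVanti hs.1 (Set.mem_Ici.mpr ht₀t) hs.2)
  -- the integrand and its properties
  set f : ℝ → ℝ := fun z => z / Ωhat z with hfdef
  have hfcont : ContinuousOn f (Set.Ioi (0:ℝ)) := by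
    have h1 : ContinuousOn (fun z => (Ωhat z / z)⁻¹) (Set.Ioi (0:ℝ)) := by
      refine ContinuousOn.inv₀ hΩhatcont fun z hz => ?_
      have hz' : (0:ℝ) < z := hz
      exact ne_of_gt (div_pos (hΩhatpos z hz') hz')
    refine h1.congr fun z hz => ?_
    rw [hfdef]
    simp only
    rw [inv_div]
  have hfpos : ∀ z ∈ Set.Ioi (0:ℝ), 0 < f z :=
    fun z hz => div_pos hz (hΩhatpos z hz)
  have hInt : IntegrableOn f (Set.Ioi (0:ℝ)) volume := by
    by_contra h
    rw [integral_undef h] at hint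
    norm_num at hint
  set F : ℝ → ℝ := fun u => ∫ z in (0:ℝ)..u, f z with hFdef
  have hII : ∀ u : ℝ, 0 ≤ u → IntervalIntegrable f volume 0 u := by
    intro u hu
    exact (intervalIntegrable_iff_integrableOn_Ioc_of_le hu).mpr
      (hInt.mono_set Set.Ioc_subset_Ioi_self)
  have hFle : ∀ u : ℝ, 0 ≤ u → F u ≤ 1 := by
    intro u hu
    rw [hFdef]
    simp only
    rw [intervalIntegral.integral_of_le hu]
    rw [← hint]
    refine setIntegral_mono_set hInt ?_ ?_
    · refine (ae_restrict_iff' measurableSet_Ioi).mpr ?_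
      exact Filter.Eventually.of_forall fun z hz => (hfpos z hz).le
    · exact HasSubset.Subset.eventuallyLE Set.Ioc_subset_Ioi_self
  have hFpos : ∀ u : ℝ, 0 < u → 0 < F u := by
    intro u hu
    refine intervalIntegral.intervalIntegral_pos_of_pos_on (hII u hu.le) ?_ hu
    intro z hz
    exact hfpos z (Set.mem_Ioi.mpr hz.1)
  -- the clock function
  set Z : ℝ → ℝ := fun s => β n * Real.sqrt (lam2 * V s) with hZdef
  have hZnn : ∀ s, 0 ≤ Z s := fun s => mul_nonneg hβn.le (Real.sqrt_nonneg _)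
  have hZpos : ∀ s ∈ Set.Icc t₀ t, 0 < Z s := by
    intro s hs
    exact mul_pos hβn (Real.sqrt_pos.mpr (mul_pos hlam2 (hVpos s hs)))
  set θ : ℝ → ℝ := fun s => F (Z s) + K * s with hθdef
  -- derivative bound for θ on Icc
  have hθkey : ∀ s ∈ Set.Icc t₀ t, ∃ D : ℝ, HasDerivAt θ D s ∧ D ≤ 0 := by
    intro s hs
    have hVs := hVpos s hs
    have hlv : 0 < lam2 * V s := mul_pos hlam2 hVs
    have hsq : 0 < Real.sqrt (lam2 * V s) := Real.sqrt_pos.mpr hlv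
    have hZs : 0 < Z s := hZpos s hs
    have hOZ : 0 < Ωhat (Z s) := hΩhatpos _ hZs
    set Dv : ℝ := 2 * (w s ⬝ᵥ Q.mulVec (x s)) with hDvdef
    have hDv : HasDerivAt V Dv s := hVder s hs.1
    -- derivative of Z
    have hZder : HasDerivAt Z (β n * (lam2 * Dv / (2 * Real.sqrt (lam2 * V s)))) s := by
      have h1 : HasDerivAt (fun r => lam2 * V r) (lam2 * Dv) s := hDv.const_mul lam2
      have h2 := (Real.hasDerivAt_sqrt (ne_of_gt hlv)).comp s h1
      have h3 : HasDerivAt (fun r => Real.sqrt (lam2 * V r))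
          (lam2 * Dv / (2 * Real.sqrt (lam2 * V s))) s := by
        refine h2.congr_deriv ?_
        ring
      exact h3.const_mul (β n)
    -- derivative of F at Z s
    have hFz : HasDerivAt F (f (Z s)) (Z s) := by
      refine integral_hasDerivAt_right (hII (Z s) hZs.le) ?_ ?_
      · exact hfcont.stronglyMeasurableAtFilter isOpen_Ioi (Z s) hZs
      · exact hfcont.continuousAt (Ioi_mem_nhds hZs)
    have hcomp : HasDerivAt (fun r => F (Z r))
        (f (Z s) * (β n * (lam2 * Dv / (2 * Real.sqrt (lam2 * V s))))) s :=
      hFz.comp s hZder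
    have hθd : HasDerivAt θ
        (f (Z s) * (β n * (lam2 * Dv / (2 * Real.sqrt (lam2 * V s)))) + K) s := by
      have hlin : HasDerivAt (fun r : ℝ => K * r) K s := by
        simpa using (hasDerivAt_id s).const_mul K
      exact hcomp.add hlin
    refine ⟨_, hθd, ?_⟩
    -- now the decay estimate
    -- 1) Dv ≤ -2 * k * Ωhat (Z s) / β n ^ d
    have hcore : Ωhat (Z s) / β n ^ d
        ≤ ∑ i, (if Q.mulVec (x s) i = 0 then 0 else Ω |Q.mulVec (x s) i|) := by
      have hray2 := aux_rayleigh2 hn Q hQsymm hQ1 lam2 hlam2 hRay (x s)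
      have hZle : Z s ≤ β n * Real.sqrt (∑ i, (Q.mulVec (x s) i) ^ 2) := by
        refine mul_le_mul_of_nonneg_left ?_ hβn.le
        exact Real.sqrt_le_sqrt hray2
      have hmono := hΩhatmono (Set.mem_Ici.mpr (hZnn s))
        (Set.mem_Ici.mpr (mul_nonneg hβn.le (Real.sqrt_nonneg _))) hZle
      have hsup := aux_superadd_ite hn Ω Ωhat β d hΩ0 hsuper (Q.mulVec (x s))
      rw [div_le_iff₀ hβd]
      calc Ωhat (Z s) ≤ Ωhat (β n * Real.sqrt (∑ i, (Q.mulVec (x s) i) ^ 2)) := hmono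
        _ ≤ β n ^ d * ∑ i, (if Q.mulVec (x s) i = 0 then 0 else Ω |Q.mulVec (x s) i|) := hsup
        _ = (∑ i, (if Q.mulVec (x s) i = 0 then 0 else Ω |Q.mulVec (x s) i|)) * β n ^ d := by ring
    have hsumk : k * (Ωhat (Z s) / β n ^ d)
        ≤ ∑ i, (if Q.mulVec (x s) i = 0 then 0 else κ i * Ω |Q.mulVec (x s) i|) := by
      have h1 : k * (Ωhat (Z s) / β n ^ d)
          ≤ k * ∑ i, (if Q.mulVec (x s) i = 0 then 0 else Ω |Q.mulVec (x s) i|) :=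
        mul_le_mul_of_nonneg_left hcore hk.le
      refine h1.trans ?_
      rw [Finset.mul_sum]
      refine Finset.sum_le_sum fun i _ => ?_
      by_cases h : Q.mulVec (x s) i = 0
      · simp [h]
      · simp only [h, if_false]
        exact mul_le_mul_of_nonneg_right (hκ i) (hΩnn _ (abs_nonneg _))
    have hDvle : Dv ≤ -(2 * k * (Ωhat (Z s) / β n ^ d)) := by
      rw [hDvdef, hwe s]
      have := hsumk
      linarith
    -- 2) conclude
    have hZval : f (Z s) * (β n * (lam2 * Dv / (2 * Real.sqrt (lam2 * V s))))
        = β n ^ 2 * lam2 * Dv / (2 * Ωhat (Z s)) := by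
      have hO : Ωhat (Z s) ≠ 0 := ne_of_gt hOZ
      have ha : Real.sqrt (lam2 * V s) ≠ 0 := ne_of_gt hsq
      show (Z s / Ωhat (Z s)) * (β n * (lam2 * Dv / (2 * Real.sqrt (lam2 * V s))))
          = β n ^ 2 * lam2 * Dv / (2 * Ωhat (Z s))
      generalize hOg : Ωhat (Z s) = O at hO ⊢
      show (β n * Real.sqrt (lam2 * V s) / O) * (β n * (lam2 * Dv / (2 * Real.sqrt (lam2 * V s))))
          = β n ^ 2 * lam2 * Dv / (2 * O)
      generalize hag : Real.sqrt (lam2 * V s) = a at ha ⊢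
      field_simp
    rw [hZval]
    -- need: β n ^ 2 * lam2 * Dv / (2 * Ωhat (Z s)) ≤ -K
    have hfinal : β n ^ 2 * lam2 * Dv / (2 * Ωhat (Z s)) ≤ -K := by
      rw [div_le_iff₀ (by positivity)]
      have hKform : K = k * lam2 * (β n ^ (2:ℕ) / β n ^ d) := by
        rw [hKdef]
        congr 1
        rw [Real.rpow_sub hβn]
        congr 1
        rw [← Real.rpow_natCast (β n) 2]
        norm_num
      have h2 : β n ^ 2 * lam2 * Dv ≤ β n ^ 2 * lam2 * (-(2 * k * (Ωhat (Z s) / β n ^ d))) :=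
        mul_le_mul_of_nonneg_left hDvle (by positivity)
      refine h2.trans (le_of_eq ?_)
      rw [hKform]
      rw [div_eq_mul_inv, div_eq_mul_inv]
      ring
    linarith
  -- θ is antitone on [t₀, t]
  have hθcont : ContinuousOn θ (Set.Icc t₀ t) := by
    intro s hs
    obtain ⟨D, hD, _⟩ := hθkey s hs
    exact hD.continuousAt.continuousWithinAt
  have hθanti : AntitoneOn θ (Set.Icc t₀ t) := by
    apply antitoneOn_of_deriv_nonpos (convex_Icc t₀ t) hθcont
    · intro s hs
      rw [interior_Icc] at hs
      obtain ⟨D, hD, _⟩ := hθkey s (Set.mem_Icc_of_Ioo hs)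
      exact hD.differentiableAt.differentiableWithinAt
    · intro s hs
      rw [interior_Icc] at hs
      obtain ⟨D, hD, hDle⟩ := hθkey s (Set.mem_Icc_of_Ioo hs)
      rw [hD.deriv]
      exact hDle
  -- conclude
  have hmem₀ : t₀ ∈ Set.Icc t₀ t := Set.mem_Icc.mpr ⟨le_refl _, ht₀t⟩
  have hmemt : t ∈ Set.Icc t₀ t := Set.mem_Icc.mpr ⟨ht₀t, le_refl _⟩
  have h1 : θ t ≤ θ t₀ := hθanti hmem₀ hmemt ht₀t
  have h2 : F (Z t) ≤ F (Z t₀) - K * (t - t₀) := by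
    rw [hθdef] at h1
    simp only at h1
    linarith
  have h3 : K * (t - t₀) ≥ 1 := by
    have : t - t₀ ≥ 1 / K := by linarith
    calc K * (t - t₀) ≥ K * (1 / K) := mul_le_mul_of_nonneg_left this hK0.le
      _ = 1 := by field_simp
  have h4 : F (Z t₀) ≤ 1 := hFle (Z t₀) (hZnn t₀)
  have h5 : 0 < F (Z t) := hFpos (Z t) (hZpos t hmemt)
  linarith
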